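/- With Ω, P₁, ..., Pₙ as above, the sesquilinear form t(f,g) = Σᵢ ∫_Ω ⟨f(Q), e_i(Q)⟩ · conj(⟨g(Q), e_i(Q)⟩) dQ on the Hilbert space L²(Ω; ℂⁿ) is a positive semidefinite Hermitian form which is definite: t(f,f) = 0 implies f = 0 a.e. Hence t defines an inner product on L²(Ω; ℂⁿ). -/

import Mathlib

open MeasureTheory Finset

/-- The projection `⟨f(Q), e_i(Q)⟩` of a vector field `f` onto the unit direction
`e_i(Q) = (P_i − Q)/|P_i − Q|`. -/
noncomputable def proj {n : ℕ} (P : Fin n → EuclideanSpace ℝ (Fin n))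
    (f : EuclideanSpace ℝ (Fin n) → (Fin n → ℂ)) (i : Fin n)
    (Q : EuclideanSpace ℝ (Fin n)) : ℂ :=
  ∑ j, f Q j * (((P i j - Q j) / dist Q (P i) : ℝ) : ℂ)

/-- The sesquilinear form `t(f,g) = Σᵢ ∫_Ω ⟨f, e_i⟩ conj⟨g, e_i⟩`. -/
noncomputable def sform {n : ℕ} (Ω : Set (EuclideanSpace ℝ (Fin n)))
    (P : Fin n → EuclideanSpace ℝ (Fin n))
    (f g : EuclideanSpace ℝ (Fin n) → (Fin n → ℂ)) : ℂ :=
  ∑ i, ∫ Q in Ω, proj P f i Q * (starRingEnd ℂ) (proj P g i Q)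

/-! ### Auxiliary lemmas -/

lemma coeff_abs_le_one {n : ℕ} (Q Pi : EuclideanSpace ℝ (Fin n)) (j : Fin n) :
    |(Pi j - Q j) / dist Q Pi| ≤ 1 := by
  have hnum : |Pi j - Q j| ≤ dist Q Pi := by
    rw [EuclideanSpace.dist_eq]
    have h1 : |Pi j - Q j| = Real.sqrt (dist (Q j) (Pi j) ^ 2) := by
      rw [Real.sqrt_sq dist_nonneg, Real.dist_eq, abs_sub_comm]
    rw [h1]
    exact Real.sqrt_le_sqrt (Finset.single_le_sum (f := fun k => dist (Q k) (Pi k) ^ 2)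
      (fun k _ => sq_nonneg _) (mem_univ j))
  rcases eq_or_lt_of_le (dist_nonneg (x := Q) (y := Pi)) with h | h
  · simp [← h]
  · rw [abs_div, abs_of_pos h, div_le_one h]
    exact hnum

lemma proj_aestronglyMeasurable {n : ℕ} (P : Fin n → EuclideanSpace ℝ (Fin n))
    (f : EuclideanSpace ℝ (Fin n) → (Fin n → ℂ)) (i : Fin n)
    (μ : Measure (EuclideanSpace ℝ (Fin n))) (hf : AEStronglyMeasurable f μ) :
    AEStronglyMeasurable (proj P f i) μ := by
  apply Finset.aestronglyMeasurable_fun_sum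
  intro j _
  have h1 : AEStronglyMeasurable (fun Q => f Q j) μ :=
    (continuous_apply j).comp_aestronglyMeasurable hf
  have h2 : Measurable (fun Q : EuclideanSpace ℝ (Fin n) =>
      (((P i j - Q j) / dist Q (P i) : ℝ) : ℂ)) := by
    apply Complex.measurable_ofReal.comp
    exact (measurable_const.sub (EuclideanSpace.proj (𝕜 := ℝ) j).continuous.measurable).div
      ((continuous_id.dist continuous_const).measurable)
  exact h1.mul h2.aestronglyMeasurable

lemma proj_memLp {n : ℕ} (P : Fin n → EuclideanSpace ℝ (Fin n))
    (f : EuclideanSpace ℝ (Fin n) → (Fin n → ℂ)) (i : Fin n)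
    (μ : Measure (EuclideanSpace ℝ (Fin n))) (hf : MemLp f 2 μ) :
    MemLp (proj P f i) 2 μ := by
  show MemLp (fun Q => ∑ j, f Q j * (((P i j - Q j) / dist Q (P i) : ℝ) : ℂ)) 2 μ
  apply memLp_finset_sum
  intro j _
  have h1 : AEStronglyMeasurable (fun Q => f Q j) μ :=
    (continuous_apply j).comp_aestronglyMeasurable hf.1
  have h2 : Measurable (fun Q : EuclideanSpace ℝ (Fin n) =>
      (((P i j - Q j) / dist Q (P i) : ℝ) : ℂ)) := by
    apply Complex.measurable_ofReal.comp
    exact (measurable_const.sub (EuclideanSpace.proj (𝕜 := ℝ) j).continuous.measurable).div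
      ((continuous_id.dist continuous_const).measurable)
  apply MemLp.of_le hf (h1.mul h2.aestronglyMeasurable)
  apply Filter.Eventually.of_forall
  intro Q
  have hb : ‖(((P i j - Q j) / dist Q (P i) : ℝ) : ℂ)‖ ≤ 1 := by
    rw [Complex.norm_real, Real.norm_eq_abs]
    exact coeff_abs_le_one Q (P i) j
  calc ‖f Q j * (((P i j - Q j) / dist Q (P i) : ℝ) : ℂ)‖
      = ‖f Q j‖ * ‖(((P i j - Q j) / dist Q (P i) : ℝ) : ℂ)‖ := norm_mul _ _
    _ ≤ ‖f Q j‖ * 1 := by gcongr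
    _ = ‖f Q j‖ := mul_one _
    _ ≤ ‖f Q‖ := norm_le_pi_norm (f Q) j

lemma sform_self_eq {n : ℕ} (Ω : Set (EuclideanSpace ℝ (Fin n)))
    (P : Fin n → EuclideanSpace ℝ (Fin n))
    (f : EuclideanSpace ℝ (Fin n) → (Fin n → ℂ)) :
    sform Ω P f f = ((∑ i, ∫ Q in Ω, Complex.normSq (proj P f i Q)) : ℝ) := by
  unfold sform
  rw [Complex.ofReal_sum]
  apply Finset.sum_congr rfl
  intro i _
  have h1 : (∫ Q in Ω, proj P f i Q * (starRingEnd ℂ) (proj P f i Q))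
      = ∫ Q in Ω, ((Complex.normSq (proj P f i Q) : ℝ) : ℂ) :=
    integral_congr_ae (Filter.Eventually.of_forall fun Q => Complex.mul_conj _)
  rw [h1]
  exact integral_ofReal

lemma det_affine {n : ℕ} (P : Fin n → EuclideanSpace ℝ (Fin n)) (Q : EuclideanSpace ℝ (Fin n)) :
    (Matrix.of fun i j => P i j - Q j).det
      = (Matrix.of fun i j => P i j).det
        - ∑ i, (Matrix.detRowAlternating (Function.update (fun i j => P i j) i (fun j => Q j)) : ℝ) := by
  classical
  set f : (Fin n → ℝ) [⋀^Fin n]→ₗ[ℝ] ℝ := Matrix.detRowAlternating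
  set m : Fin n → Fin n → ℝ := fun i j => P i j with hm
  set w : Fin n → ℝ := fun j => -Q j with hw
  have heq : (fun i j => P i j - Q j) = (m + fun _ => w) := by
    funext i j; simp [m, w, sub_eq_add_neg]
  have hL : (Matrix.of fun i j => P i j - Q j).det
      = f.toMultilinearMap (m + fun _ => w) := by
    rw [show (Matrix.of fun i j => P i j - Q j).det
      = f.toMultilinearMap (fun i j => P i j - Q j) from rfl, heq]
  rw [hL, f.toMultilinearMap.map_add_univ m (fun _ => w)]
  have hzero : ∀ s ∈ Finset.univ (α := Finset (Fin n)),
      s ∉ insert Finset.univ (Finset.univ.image fun i => Finset.univ.erase i) →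
      f.toMultilinearMap (s.piecewise m fun _ => w) = 0 := by
    intro s _ hs
    simp only [Finset.mem_insert, Finset.mem_image, Finset.mem_univ, true_and, not_or,
      not_exists] at hs
    obtain ⟨hs1, hs2⟩ := hs
    obtain ⟨i, hi⟩ : ∃ i, i ∉ s := by
      by_contra h
      push_neg at h
      exact hs1 (Finset.eq_univ_iff_forall.2 h)
    have hss : s ⊆ Finset.univ.erase i := fun k hk =>
      Finset.mem_erase.2 ⟨fun h => hi (h ▸ hk), Finset.mem_univ k⟩
    obtain ⟨k, hk, hks⟩ : ∃ k ∈ Finset.univ.erase i, k ∉ s := by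
      rcases Finset.exists_of_ssubset (hss.ssubset_of_ne (fun h => hs2 i h.symm)) with ⟨k, h1, h2⟩
      exact ⟨k, h1, h2⟩
    have hki : k ≠ i := (Finset.mem_erase.1 hk).1
    have : f (s.piecewise m fun _ => w) = 0 := by
      apply f.map_eq_zero_of_eq _ _ hki
      rw [Finset.piecewise_eq_of_notMem _ _ _ hks, Finset.piecewise_eq_of_notMem _ _ _ hi]
    exact this
  rw [← Finset.sum_subset (Finset.subset_univ _) hzero]
  have hins : Finset.univ (α := Fin n) ∉ Finset.univ.image fun i => Finset.univ.erase i := by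
    intro h
    rcases Finset.mem_image.1 h with ⟨i, _, hi⟩
    have := Finset.mem_univ i
    rw [← hi] at this
    exact (Finset.mem_erase.1 this).1 rfl
  rw [Finset.sum_insert hins]
  have huniv : f.toMultilinearMap (Finset.univ.piecewise m fun _ => w) = (Matrix.of fun i j => P i j).det := by
    rw [Finset.piecewise_univ]
    rfl
  rw [huniv]
  congr 1
  rw [Finset.sum_image (fun i _ j _ h => by
    by_contra hij
    have : i ∈ Finset.univ.erase j := Finset.mem_erase.2 ⟨hij, Finset.mem_univ i⟩
    rw [← h] at this
    exact (Finset.mem_erase.1 this).1 rfl)]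
  rw [← Finset.sum_neg_distrib]
  apply Finset.sum_congr rfl
  intro i _
  have hpw : (Finset.univ.erase i).piecewise m (fun _ => w) = Function.update m i w := by
    funext k
    by_cases hk : k = i
    · subst hk
      rw [Finset.piecewise_eq_of_notMem _ _ _ (fun h => (Finset.mem_erase.1 h).1 rfl),
        Function.update_self]
    · rw [Finset.piecewise_eq_of_mem _ _ _ (Finset.mem_erase.2 ⟨hk, Finset.mem_univ k⟩),
        Function.update_of_ne hk]
  show f _ = _
  rw [hpw, hw]
  have : (fun j => -Q j) = -(fun j => Q j) := by funext j; simp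
  rw [this]
  exact f.toMultilinearMap.map_update_neg m i _

lemma det_zeroset_measure_zero {n : ℕ} (P : Fin n → EuclideanSpace ℝ (Fin n))
    (hdet : (Matrix.of fun i j => P i j).det ≠ 0) :
    volume {Q : EuclideanSpace ℝ (Fin n) | (Matrix.of fun i j => P i j - Q j).det = 0} = 0 := by
  classical
  set m : Fin n → Fin n → ℝ := fun i j => P i j with hm
  set L : EuclideanSpace ℝ (Fin n) →ₗ[ℝ] ℝ :=
    { toFun := fun Q => ∑ i, (Matrix.detRowAlternating (Function.update m i (fun j => Q j)) : ℝ)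
      map_add' := by
        intro x y
        rw [← Finset.sum_add_distrib]
        apply Finset.sum_congr rfl
        intro i _
        have : (fun j => (x + y) j) = (fun j => x j) + fun j => y j := by
          funext j; simp [PiLp.add_apply]
        rw [this]
        exact (Matrix.detRowAlternating (R := ℝ) (n := Fin n)).toMultilinearMap.map_update_add m i _ _
      map_smul' := by
        intro c x
        simp only [RingHom.id_apply]
        rw [Finset.smul_sum]
        apply Finset.sum_congr rfl
        intro i _
        have : (fun j => (c • x) j) = c • fun j => x j := by
          funext j; simp [PiLp.smul_apply]
        rw [this]
        exact (Matrix.detRowAlternating (R := ℝ) (n := Fin n)).toMultilinearMap.map_update_smul m i c _ } with hL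
  set c : ℝ := (Matrix.of fun i j => P i j).det with hc
  have hset : {Q : EuclideanSpace ℝ (Fin n) | (Matrix.of fun i j => P i j - Q j).det = 0}
      = {Q | L Q = c} := by
    ext Q
    simp only [Set.mem_setOf_eq, det_affine P Q, sub_eq_zero]
    exact ⟨fun h => h.symm, fun h => h.symm⟩
  rw [hset]
  rcases Set.eq_empty_or_nonempty {Q : EuclideanSpace ℝ (Fin n) | L Q = c} with he | ⟨Q₀, hQ₀⟩
  · rw [he]; exact measure_empty
  · have hLne : L ≠ 0 := by
      intro h
      rw [h] at hQ₀
      exact hdet (by simpa using hQ₀.symm)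
    have hker : LinearMap.ker L ≠ ⊤ := by
      intro h
      exact hLne (LinearMap.ker_eq_top.1 h)
    have hset2 : {Q : EuclideanSpace ℝ (Fin n) | L Q = c}
        = (fun Q => Q + (-Q₀)) ⁻¹' (LinearMap.ker L : Set (EuclideanSpace ℝ (Fin n))) := by
      ext Q
      simp only [Set.mem_preimage, SetLike.mem_coe, LinearMap.mem_ker, Set.mem_setOf_eq,
        map_add, map_neg]
      rw [hQ₀]
      constructor
      · intro h; rw [h]; ring
      · intro h; linarith
    rw [hset2, measure_preimage_add_right]
    exact Measure.addHaar_submodule volume (LinearMap.ker L) hker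

/-- On a bounded convex domain `Ω` with boundary points `P₁,...,Pₙ` of
nonzero coordinate determinant, the form `t` is Hermitian, positive semidefinite and
definite on `L²(Ω; ℂⁿ)`: `t(f,f) = 0` implies `f = 0` a.e. Hence it is an inner product. -/
theorem stmt10 {n : ℕ} (Ω : Set (EuclideanSpace ℝ (Fin n)))
    (hconv : Convex ℝ Ω) (hbdd : Bornology.IsBounded Ω)
    (P : Fin n → EuclideanSpace ℝ (Fin n)) (hPfr : ∀ i, P i ∈ frontier Ω)
    (hdet : (Matrix.of fun i j => P i j).det ≠ 0) :
    (∀ f g : EuclideanSpace ℝ (Fin n) → (Fin n → ℂ),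
        MemLp f 2 (volume.restrict Ω) → MemLp g 2 (volume.restrict Ω) →
        sform Ω P g f = (starRingEnd ℂ) (sform Ω P f g))
    ∧ (∀ f : EuclideanSpace ℝ (Fin n) → (Fin n → ℂ), MemLp f 2 (volume.restrict Ω) →
        0 ≤ (sform Ω P f f).re ∧ (sform Ω P f f).im = 0)
    ∧ (∀ f : EuclideanSpace ℝ (Fin n) → (Fin n → ℂ), MemLp f 2 (volume.restrict Ω) →
        sform Ω P f f = 0 → ∀ᵐ Q ∂(volume.restrict Ω), f Q = 0) := by
  classical
  refine ⟨?_, ?_, ?_⟩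
  · -- Hermitian
    intro f g _ _
    unfold sform
    rw [map_sum]
    apply Finset.sum_congr rfl
    intro i _
    rw [← integral_conj]
    apply integral_congr_ae
    apply Filter.Eventually.of_forall
    intro Q
    simp only [map_mul, RingHomCompTriple.comp_apply, RingHom.id_apply, Complex.conj_conj]
    ring
  · -- positive semidefinite
    intro f _
    rw [sform_self_eq]
    constructor
    · rw [Complex.ofReal_re]
      apply Finset.sum_nonneg
      intro i _
      exact integral_nonneg fun Q => Complex.normSq_nonneg _
    · exact Complex.ofReal_im _
  · -- definite
    intro f hf h0
    rcases Nat.eq_zero_or_pos n with hn | hn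
    · subst hn
      apply Filter.Eventually.of_forall
      intro Q
      funext j
      exact j.elim0
    -- n ≥ 1
    haveI : Nonempty (Fin n) := ⟨⟨0, hn⟩⟩
    haveI : Nontrivial (EuclideanSpace ℝ (Fin n)) := by
      refine ⟨0, EuclideanSpace.single ⟨0, hn⟩ 1, fun h => ?_⟩
      have := congrArg (fun v : EuclideanSpace ℝ (Fin n) => v ⟨0, hn⟩) h
      simp [EuclideanSpace.single_apply] at this
    haveI := Module.punctured_nhds_neBot ℝ (EuclideanSpace ℝ (Fin n))
    haveI : NullSingletonClass (volume : Measure (EuclideanSpace ℝ (Fin n))) := by infer_instance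
    -- each projection vanishes a.e.
    have hproj : ∀ i, ∀ᵐ Q ∂(volume.restrict Ω), proj P f i Q = 0 := by
      have hsum : (∑ i, ∫ Q in Ω, Complex.normSq (proj P f i Q)) = 0 := by
        have := sform_self_eq Ω P f
        rw [h0] at this
        exact_mod_cast this.symm
      intro i
      have hint : Integrable (fun Q => Complex.normSq (proj P f i Q)) (volume.restrict Ω) := by
        have hm2 : MemLp (proj P f i) 2 (volume.restrict Ω) := proj_memLp P f i _ hf
        have := (memLp_two_iff_integrable_sq_norm hm2.1).1 hm2
        apply this.congr
        apply Filter.Eventually.of_forall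
        intro Q
        show ‖proj P f i Q‖ ^ 2 = Complex.normSq (proj P f i Q)
        exact (Complex.normSq_eq_norm_sq _).symm
      have hiz : (∫ Q in Ω, Complex.normSq (proj P f i Q)) = 0 := by
        have hnonneg : ∀ k ∈ Finset.univ (α := Fin n),
            0 ≤ ∫ Q in Ω, Complex.normSq (proj P f k Q) :=
          fun k _ => integral_nonneg fun Q => Complex.normSq_nonneg _
        exact (Finset.sum_eq_zero_iff_of_nonneg hnonneg).1 hsum i (Finset.mem_univ i)
      have := (integral_eq_zero_iff_of_nonneg (fun Q => Complex.normSq_nonneg _) hint).1 hiz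
      filter_upwards [this] with Q hQ
      exact Complex.normSq_eq_zero.1 hQ
    have hprojall : ∀ᵐ Q ∂(volume.restrict Ω), ∀ i, proj P f i Q = 0 :=
      (MeasureTheory.ae_all_iff).2 hproj
    -- the determinant is nonzero a.e.
    have hdetae : ∀ᵐ Q ∂(volume.restrict Ω),
        (Matrix.of fun i j => P i j - Q j).det ≠ 0 := by
      apply ae_restrict_of_ae
      rw [MeasureTheory.ae_iff]
      convert det_zeroset_measure_zero P hdet using 2
      ext Q
      simp
    -- Q ≠ P i a.e.
    have hne : ∀ᵐ Q ∂(volume.restrict Ω), ∀ i, Q ≠ P i := by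
      apply ae_restrict_of_ae
      rw [MeasureTheory.ae_all_iff]
      intro i
      rw [MeasureTheory.ae_iff]
      have hs : {Q : EuclideanSpace ℝ (Fin n) | ¬Q ≠ P i} = {P i} := by ext Q; simp
      rw [hs]
      exact measure_singleton _
    filter_upwards [hprojall, hdetae, hne] with Q h1 h2 h3
    -- matrix algebra
    set d : Fin n → ℝ := fun i => (dist Q (P i))⁻¹ with hd
    set A : Matrix (Fin n) (Fin n) ℝ := Matrix.of fun i j => P i j - Q j with hA
    set M : Matrix (Fin n) (Fin n) ℝ :=
      Matrix.of fun i j => (P i j - Q j) / dist Q (P i) with hM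
    have hMeq : M = Matrix.diagonal d * A := by
      ext i j
      simp only [hM, Matrix.of_apply, Matrix.diagonal_mul, hA, hd]
      rw [div_eq_inv_mul]
    have hdne : ∀ i, d i ≠ 0 := fun i => inv_ne_zero (dist_ne_zero.2 (h3 i))
    have hMdet : M.det ≠ 0 := by
      rw [hMeq, Matrix.det_mul, Matrix.det_diagonal]
      exact mul_ne_zero (Finset.prod_ne_zero_iff.2 fun i _ => hdne i) h2
    set Mc : Matrix (Fin n) (Fin n) ℂ := M.map Complex.ofReal with hMc
    have hMcdet : Mc.det ≠ 0 := by
      have hmap := RingHom.map_det Complex.ofRealHom M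
      rw [RingHom.mapMatrix_apply] at hmap
      rw [hMc, show (Complex.ofReal : ℝ → ℂ) = ⇑Complex.ofRealHom from rfl, ← hmap]
      simpa using hMdet
    have hv : Matrix.mulVec Mc (f Q) = 0 := by
      funext i
      have hpi := h1 i
      unfold proj at hpi
      show Matrix.mulVec Mc (f Q) i = (0 : Fin n → ℂ) i
      rw [Pi.zero_apply, ← hpi]
      simp only [Matrix.mulVec, dotProduct, hMc, Matrix.map_apply, hM, Matrix.of_apply]
      apply Finset.sum_congr rfl
      intro j _
      ring
    exact Matrix.eq_zero_of_mulVec_eq_zero hMcdet hv
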